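/- Let A be a unital C*-algebra with a tracial state τ, and let A₀, B₀ ⊆ A be star-subalgebras that are 2-independent with respect to τ. Then for every self-adjoint x ∈ A₀ and every self-adjoint y ∈ B₀ with τ(x) = τ(y) = 0, one has ‖[x, y]‖₂ = √2 · ‖x‖₂ · ‖y‖₂. In particular, if in addition ‖x‖₂ > 0 and ‖y‖₂ > 0, then [x, y] ≠ 0. -/

import Mathlib

/-- A tracial state on a unital C*-algebra `A`, viewed as a `ℂ`-linear functional:
it is unital, takes nonnegative real values on elements of the form `a* a`,
and is tracial. -/
structure IsTracialState {A : Type*} [NormedRing A] [StarRing A] [NormedAlgebra ℂ A]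
    (τ : A →ₗ[ℂ] ℂ) : Prop where
  map_one : τ 1 = 1
  nonneg_re : ∀ a : A, 0 ≤ (τ (star a * a)).re
  im_eq_zero : ∀ a : A, (τ (star a * a)).im = 0
  trace_comm : ∀ a b : A, τ (a * b) = τ (b * a)

/-- The 2-norm `‖x‖₂ = τ(x* x)^{1/2}` associated with a tracial state `τ`. -/
noncomputable def trNorm2 {A : Type*} [NormedRing A] [StarRing A] [NormedAlgebra ℂ A]
    (τ : A →ₗ[ℂ] ℂ) (x : A) : ℝ :=
  Real.sqrt ((τ (star x * x)).re)

/-- If `A₀, B₀` are 2-independent star-subalgebras with respect to a tracial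
state `τ`, then for all trace-zero self-adjoint `x ∈ A₀` and `y ∈ B₀` one has
`‖[x, y]‖₂ = √2 ‖x‖₂ ‖y‖₂`; in particular, if moreover `‖x‖₂ > 0` and
`‖y‖₂ > 0`, then `[x, y] ≠ 0`. -/
theorem norm2_commutator_of_two_independent
    {A : Type*} [NormedRing A] [StarRing A] [CStarRing A]
    [NormedAlgebra ℂ A] [StarModule ℂ A] [CompleteSpace A]
    (τ : A →ₗ[ℂ] ℂ) (hτ : IsTracialState τ)
    (A₀ B₀ : StarSubalgebra ℂ A)
    (hind1 : ∀ a ∈ A₀, ∀ b ∈ B₀, τ (a * b) = τ a * τ b)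
    (hind2 : ∀ a₁ ∈ A₀, ∀ a₂ ∈ A₀, ∀ b₁ ∈ B₀, ∀ b₂ ∈ B₀,
      τ a₁ = 0 → τ a₂ = 0 → τ b₁ = 0 → τ b₂ = 0 → τ (a₁ * b₁ * a₂ * b₂) = 0) :
    ∀ x y : A, x ∈ A₀ → y ∈ B₀ → star x = x → star y = y →
      τ x = 0 → τ y = 0 →
      trNorm2 τ (x * y - y * x) = Real.sqrt 2 * trNorm2 τ x * trNorm2 τ y ∧
      (0 < trNorm2 τ x → 0 < trNorm2 τ y → x * y - y * x ≠ 0) := by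
  intro x y hx hy hsx hsy htx hty
  have hxx : x * x ∈ A₀ := mul_mem hx hx
  have hyy : y * y ∈ B₀ := mul_mem hy hy
  -- product formula for the "good" term
  have t1 : τ (y * (x * (x * y))) = τ (x * x) * τ (y * y) := by
    have h1 : τ (y * (x * (x * y))) = τ ((x * x) * (y * y)) := by
      rw [hτ.trace_comm y (x * (x * y))]
      congr 1
      noncomm_ring
    rw [h1, hind1 _ hxx _ hyy]
  have t4 : τ (x * (y * (y * x))) = τ (x * x) * τ (y * y) := by
    have h1 : τ (x * (y * (y * x))) = τ ((x * x) * (y * y)) := by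
      rw [hτ.trace_comm x (y * (y * x)),
        show y * (y * x) * x = (y * y) * (x * x) by noncomm_ring,
        hτ.trace_comm (y * y) (x * x)]
    rw [h1, hind1 _ hxx _ hyy]
  have t3 : τ (x * (y * (x * y))) = 0 := by
    have := hind2 x hx x hx y hy y hy htx htx hty hty
    rw [show x * y * x * y = x * (y * (x * y)) by noncomm_ring] at this
    exact this
  have t2 : τ (y * (x * (y * x))) = 0 := by
    have h1 : τ (y * (x * (y * x))) = τ (x * y * x * y) := by
      rw [hτ.trace_comm y (x * (y * x))]
      congr 1
      noncomm_ring
    rw [h1]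
    exact hind2 x hx x hx y hy y hy htx htx hty hty
  -- the key trace identity
  have hsc : star (x * y - y * x) = y * x - x * y := by
    simp [star_sub, star_mul, hsx, hsy]
  have expand : (y * x - x * y) * (x * y - y * x)
      = y * (x * (x * y)) - y * (x * (y * x)) - x * (y * (x * y)) + x * (y * (y * x)) := by
    noncomm_ring
  have key : τ (star (x * y - y * x) * (x * y - y * x))
      = 2 * (τ (x * x) * τ (y * y)) := by
    rw [hsc, expand, map_add, map_sub, map_sub, t1, t2, t3, t4]
    ring
  -- real parts
  have hximx : (τ (x * x)).im = 0 := by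
    have := hτ.im_eq_zero x; rwa [hsx] at this
  have hyimy : (τ (y * y)).im = 0 := by
    have := hτ.im_eq_zero y; rwa [hsy] at this
  have hxrex : 0 ≤ (τ (x * x)).re := by
    have := hτ.nonneg_re x; rwa [hsx] at this
  have hyrey : 0 ≤ (τ (y * y)).re := by
    have := hτ.nonneg_re y; rwa [hsy] at this
  set p := (τ (x * x)).re with hp
  set q := (τ (y * y)).re with hq
  have hre : (τ (star (x * y - y * x) * (x * y - y * x))).re = 2 * (p * q) := by
    rw [key]
    simp [Complex.mul_re, Complex.mul_im, hximx, hyimy]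
    rfl
  have hnx : trNorm2 τ x = Real.sqrt p := by
    unfold trNorm2; rw [hsx]
  have hny : trNorm2 τ y = Real.sqrt q := by
    unfold trNorm2; rw [hsy]
  have hmain : trNorm2 τ (x * y - y * x) = Real.sqrt 2 * trNorm2 τ x * trNorm2 τ y := by
    rw [hnx, hny]
    unfold trNorm2
    rw [hre, show (2 : ℝ) * (p * q) = 2 * p * q by ring,
      Real.sqrt_mul (by positivity), Real.sqrt_mul (by norm_num)]
  refine ⟨hmain, ?_⟩
  intro hpx hpy hzero
  rw [hzero] at hmain
  have : trNorm2 τ (0 : A) = 0 := by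
    unfold trNorm2; simp
  rw [this] at hmain
  have : 0 < Real.sqrt 2 * trNorm2 τ x * trNorm2 τ y := by positivity
  linarith [hmain ▸ this]
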